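/- In the symmetric group Sym(6) on {1,…,6}, let x̄ = (1 2 3) and ȳ = (1 4)(2 5)(3 6). Then the subgroup F = ⟨x̄, ȳ⟩ has order 18, x̄³ = 1, ȳ² = 1, and x̄ commutes with ȳ·x̄·ȳ. -/
import Mathlib


open Equiv

set_option maxRecDepth 40000
set_option maxHeartbeats 2000000

private def xP : Equiv.Perm (Fin 6) := c[1, 2, 3]
private def yP : Equiv.Perm (Fin 6) := c[1, 4] * c[2, 5] * c[3, 6]
private def zP : Equiv.Perm (Fin 6) := yP * xP * yP

private def F18 : Finset (Equiv.Perm (Fin 6)) :=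
  Finset.image (fun p : Fin 3 × Fin 3 × Fin 2 =>
    xP ^ (p.1 : ℕ) * zP ^ (p.2.1 : ℕ) * yP ^ (p.2.2 : ℕ)) Finset.univ

private lemma hmul : ∀ a ∈ F18, ∀ b ∈ F18, a * b ∈ F18 := by
  intro a ha
  obtain ⟨p, -, rfl⟩ := Finset.mem_image.mp ha
  fin_cases p <;> decide
private lemma hinv : ∀ a ∈ F18, a⁻¹ ∈ F18 := by
  intro a ha
  obtain ⟨p, -, rfl⟩ := Finset.mem_image.mp ha
  fin_cases p <;> decide
private lemma hone : (1 : Equiv.Perm (Fin 6)) ∈ F18 := by decide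
private lemma hx : xP ∈ F18 := by decide
private lemma hy : yP ∈ F18 := by decide
private lemma hcard : F18.card = 18 := by decide

private def H18 : Subgroup (Equiv.Perm (Fin 6)) where
  carrier := ↑F18
  one_mem' := hone
  mul_mem' := fun ha hb => hmul _ ha _ hb
  inv_mem' := fun ha => hinv _ ha

private lemma closure_eq :
    Subgroup.closure ({xP, yP} : Set (Equiv.Perm (Fin 6))) = H18 := by
  apply le_antisymm
  · rw [Subgroup.closure_le]
    intro g hg
    rcases hg with rfl | rfl
    · exact hx
    · exact hy
  · intro g hg
    have hxc : xP ∈ Subgroup.closure ({xP, yP} : Set (Equiv.Perm (Fin 6))) :=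
      Subgroup.subset_closure (by left; rfl)
    have hyc : yP ∈ Subgroup.closure ({xP, yP} : Set (Equiv.Perm (Fin 6))) :=
      Subgroup.subset_closure (by right; rfl)
    have hzc : zP ∈ Subgroup.closure ({xP, yP} : Set (Equiv.Perm (Fin 6))) :=
      mul_mem (mul_mem hyc hxc) hyc
    have hg' : g ∈ F18 := hg
    rcases Finset.mem_image.mp hg' with ⟨p, _, rfl⟩
    exact mul_mem (mul_mem (pow_mem hxc _) (pow_mem hzc _)) (pow_mem hyc _)

/-- **The group `F ≅ (ℤ/3 × ℤ/3) ⋊ ℤ/2`.** In `Sym(6)` (labels in `Fin 6`, `6`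
being `0`), with `x̄ = (1 2 3)` and `ȳ = (1 4)(2 5)(3 6)`, the subgroup `⟨x̄, ȳ⟩`
has order 18, `x̄³ = 1`, `ȳ² = 1`, and `x̄` commutes with `ȳ·x̄·ȳ`. -/
theorem cartographic_group_of_fermat_dessin :
    let x : Equiv.Perm (Fin 6) := c[1, 2, 3]
    let y : Equiv.Perm (Fin 6) := c[1, 4] * c[2, 5] * c[3, 6]
    Nat.card (Subgroup.closure ({x, y} : Set (Equiv.Perm (Fin 6)))) = 18 ∧
      x ^ 3 = 1 ∧ y ^ 2 = 1 ∧ Commute x (y * x * y) := by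
  intro x y
  refine ⟨?_, by decide, by decide, show x*(y*x*y)=(y*x*y)*x by decide⟩
  have : x = xP := rfl
  have : y = yP := rfl
  show Nat.card (Subgroup.closure ({xP, yP} : Set (Equiv.Perm (Fin 6)))) = 18
  rw [closure_eq]
  have : Nat.card H18 = Nat.card (↑F18 : Set (Equiv.Perm (Fin 6))) := rfl
  rw [this, Nat.card_coe_set_eq, Set.ncard_coe_finset, hcard]
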